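/- Let p be a prime and n = 2^p − 1. Then for every nonzero x ∈ ℤ/nℤ, the least positive integer k with 2^k · x = x in ℤ/nℤ is exactly p; equivalently, the orbit of any nonzero x under the map y ↦ 2y on ℤ/nℤ has exactly p elements, while 0 is a fixed point. -/

import Mathlib

theorem stmt17 (p : ℕ) (hp : p.Prime) :
    (∀ x : ZMod (2 ^ p - 1), x ≠ 0 →
      IsLeast {k : ℕ | 0 < k ∧ (2 : ZMod (2 ^ p - 1)) ^ k * x = x} p ∧
      Set.ncard {y : ZMod (2 ^ p - 1) | ∃ k : ℕ, y = (2 : ZMod (2 ^ p - 1)) ^ k * x} = p) ∧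
    (2 : ZMod (2 ^ p - 1)) * 0 = 0 := by
  have h1 : 1 ≤ 2 ^ p := Nat.one_le_two_pow
  have h2p : (2 : ZMod (2 ^ p - 1)) ^ p = 1 := by
    have e : (2 : ℕ) ^ p = (2 ^ p - 1) + 1 := by omega
    have h := congrArg (Nat.cast : ℕ → ZMod (2 ^ p - 1)) e
    rw [Nat.cast_add, Nat.cast_pow, ZMod.natCast_self, Nat.cast_one, zero_add] at h
    simpa using h
  have hunit : IsUnit (2 : ZMod (2 ^ p - 1)) := by
    apply IsUnit.of_mul_eq_one (2 ^ (p - 1))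
    have : (2 : ZMod (2 ^ p - 1)) * 2 ^ (p - 1) = 2 ^ (p - 1 + 1) := (pow_succ' 2 (p - 1)).symm
    rw [this, Nat.sub_add_cancel hp.one_lt.le]
    exact h2p
  have key : ∀ (x : ZMod (2 ^ p - 1)) (k : ℕ), (2 : ZMod (2 ^ p - 1)) ^ k * x = x →
      ¬ p ∣ k → x = 0 := by
    intro x k hk hnd
    have hc : Nat.Coprime k p := ((hp.coprime_iff_not_dvd).mpr hnd).symm
    obtain ⟨a, -, ha⟩ := Nat.exists_mul_mod_eq_one_of_coprime hc hp.one_lt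
    have hdm := Nat.div_add_mod (k * a) p
    have hq : k * a = p * (k * a / p) + 1 := by omega
    have hall : ∀ m, ((2 : ZMod (2 ^ p - 1)) ^ k) ^ m * x = x := by
      intro m
      induction m with
      | zero => simp
      | succ m ih => rw [pow_succ, mul_assoc, hk, ih]
    have hx1 : (2 : ZMod (2 ^ p - 1)) ^ (k * a) * x = x := by rw [pow_mul]; exact hall a
    have hx2 : (2 : ZMod (2 ^ p - 1)) ^ (k * a) = 2 := by
      rw [hq, pow_add, pow_mul, h2p, one_pow, pow_one, one_mul]
    rw [hx2, two_mul] at hx1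
    exact add_eq_right.mp hx1
  have lb : ∀ (x : ZMod (2 ^ p - 1)), x ≠ 0 → ∀ k, 0 < k →
      (2 : ZMod (2 ^ p - 1)) ^ k * x = x → p ≤ k := by
    intro x hx k hk0 hkx
    by_cases hd : p ∣ k
    · exact Nat.le_of_dvd hk0 hd
    · exact absurd (key x k hkx hd) hx
  have red : ∀ k, (2 : ZMod (2 ^ p - 1)) ^ k = 2 ^ (k % p) := by
    intro k
    conv_lhs => rw [← Nat.div_add_mod k p]
    rw [pow_add, pow_mul, h2p, one_pow, one_mul]
  constructor
  · intro x hx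
    have hmemp : (2 : ZMod (2 ^ p - 1)) ^ p * x = x := by rw [h2p, one_mul]
    have cancel : ∀ i j, i ≤ j → j < p → (2 : ZMod (2 ^ p - 1)) ^ i * x = 2 ^ j * x → i = j := by
      intro i j hij hjp heq
      by_contra hne
      have hd : 0 < j - i := by omega
      have heq2 : (2 : ZMod (2 ^ p - 1)) ^ i * (2 ^ (j - i) * x) = 2 ^ i * x := by
        rw [← mul_assoc, ← pow_add, Nat.add_sub_cancel' hij]
        exact heq.symm
      have h2 : (2 : ZMod (2 ^ p - 1)) ^ (j - i) * x = x := (hunit.pow i).mul_left_cancel heq2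
      have := lb x hx (j - i) hd h2
      omega
    refine ⟨⟨⟨hp.pos, hmemp⟩, ?_⟩, ?_⟩
    · rintro k ⟨hk0, hkx⟩
      exact lb x hx k hk0 hkx
    · have himg : {y : ZMod (2 ^ p - 1) | ∃ k : ℕ, y = (2 : ZMod (2 ^ p - 1)) ^ k * x} =
          (fun k => (2 : ZMod (2 ^ p - 1)) ^ k * x) '' Set.Iio p := by
        ext y
        simp only [Set.mem_setOf_eq, Set.mem_image, Set.mem_Iio]
        constructor
        · rintro ⟨k, rfl⟩
          exact ⟨k % p, Nat.mod_lt _ hp.pos, by rw [← red]⟩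
        · rintro ⟨k, _, rfl⟩
          exact ⟨k, rfl⟩
      rw [himg, Set.ncard_image_of_injOn, ← Finset.coe_range, Set.ncard_coe_finset,
        Finset.card_range]
      intro i hi j hj hij
      rcases le_total i j with h | h
      · exact cancel i j h hj hij
      · exact (cancel j i h hi hij.symm).symm
  · exact mul_zero 2
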